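/- If a finitely generated group G admits a bi-Lipschitz embedding into L₁ (i.e., there exist f : G → L₁ and c, C > 0 with c·d_G(x,y) ≤ ‖f(x)−f(y)‖₁ ≤ C·d_G(x,y) for all x,y ∈ G), then the wreath product G≀ℤ, with the word metric from its canonical generating set, also admits a bi-Lipschitz embedding into L₁. -/

import Mathlib

open MeasureTheory ENNReal

/-- The word length distance on a group `G` associated to a generating set `S`. -/
noncomputable def wordDist {G : Type*} [Group G] (S : Set G) (x y : G) : ℕ :=
  sInf {n : ℕ | ∃ l : List G, l.length = n ∧ (∀ s ∈ l, s ∈ S) ∧ x⁻¹ * y = l.prod}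

/-- `S` is a symmetric generating set of `G`. -/
def IsSymmGenSet {G : Type*} [Group G] (S : Set G) : Prop :=
  (∀ s ∈ S, s⁻¹ ∈ S) ∧ Subgroup.closure S = ⊤

/-- There is a Lipschitz embedding of `(G, d)` into an `L_p` space with compression `α`. -/
def HasCompressionLp {G : Type*} (p : ℝ≥0∞) (d : G → G → ℕ) (α : ℝ) : Prop :=
  ∃ (Ω : Type) (_ : MeasurableSpace Ω) (μ : Measure Ω) (f : G → Lp ℝ p μ) (c C : ℝ),
    0 < c ∧ 0 < C ∧
      (∀ x y : G, x ≠ y → c * (d x y : ℝ) ^ α ≤ ‖f x - f y‖) ∧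
      (∀ x y : G, ‖f x - f y‖ ≤ C * (d x y : ℝ))

/-- The `L_p` compression exponent `α_p^*` of `(G, d)`; for `p = 2` this is the Hilbert
compression exponent `α^*`. -/
noncomputable def compressionExp {G : Type*} (p : ℝ≥0∞) (d : G → G → ℕ) : ℝ :=
  sSup {α : ℝ | 0 ≤ α ∧ HasCompressionLp p d α}
/-- The (restricted) wreath product `G ≀ H`: pairs `(f, x)` of a finitely supported function
`f : H → G` and an element `x ∈ H`, with product `(f,x)(g,y) = (z ↦ f(z)g(x⁻¹z), xy)`. -/
@[ext]
structure Wreath (G H : Type*) [One G] where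
  toFun : H → G
  pos : H
  finsupp : (Function.mulSupport toFun).Finite

namespace Wreath

variable {G H : Type*} [Group G] [Group H]

instance : One (Wreath G H) :=
  ⟨⟨fun _ => 1, 1, by
    have : Function.mulSupport (fun _ : H => (1 : G)) = ∅ :=
      Function.mulSupport_eq_empty_iff.mpr rfl
    rw [this]; exact Set.finite_empty⟩⟩

instance : Mul (Wreath G H) :=
  ⟨fun a b =>
    ⟨fun z => a.toFun z * b.toFun (a.pos⁻¹ * z), a.pos * b.pos, by
      have h2 : (Function.mulSupport fun z => b.toFun (a.pos⁻¹ * z)).Finite := by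
        have : (Function.mulSupport fun z => b.toFun (a.pos⁻¹ * z)) =
            (fun z : H => a.pos⁻¹ * z) ⁻¹' Function.mulSupport b.toFun :=
          Function.mulSupport_comp_eq_preimage _ _
        rw [this]
        exact b.finsupp.preimage (mul_right_injective a.pos⁻¹).injOn
      exact (a.finsupp.union h2).subset (Function.mulSupport_mul _ _)⟩⟩

instance : Inv (Wreath G H) :=
  ⟨fun a =>
    ⟨fun z => (a.toFun (a.pos * z))⁻¹, a.pos⁻¹, by
      have : (Function.mulSupport fun z => (a.toFun (a.pos * z))⁻¹) =
          (fun z : H => a.pos * z) ⁻¹' Function.mulSupport a.toFun := by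
        change Function.mulSupport (fun z => a.toFun (a.pos * z))⁻¹ = _
        rw [Function.mulSupport_inv]
        exact Function.mulSupport_comp_eq_preimage _ _
      rw [this]
      exact a.finsupp.preimage (mul_right_injective a.pos).injOn⟩⟩

@[simp] lemma mul_toFun (a b : Wreath G H) :
    (a * b).toFun = fun z => a.toFun z * b.toFun (a.pos⁻¹ * z) := rfl

@[simp] lemma mul_pos' (a b : Wreath G H) : (a * b).pos = a.pos * b.pos := rfl

@[simp] lemma one_toFun : (1 : Wreath G H).toFun = fun _ => (1 : G) := rfl

@[simp] lemma one_pos' : (1 : Wreath G H).pos = (1 : H) := rfl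

@[simp] lemma inv_toFun (a : Wreath G H) :
    (a⁻¹).toFun = fun z => (a.toFun (a.pos * z))⁻¹ := rfl

@[simp] lemma inv_pos' (a : Wreath G H) : (a⁻¹).pos = a.pos⁻¹ := rfl

instance : Group (Wreath G H) where
  mul_assoc a b c := by
    refine Wreath.ext ?_ ?_
    · funext z; simp [mul_assoc, mul_inv_rev]
    · simp [mul_assoc]
  one_mul a := by
    refine Wreath.ext ?_ ?_
    · funext z; simp
    · simp
  mul_one a := by
    refine Wreath.ext ?_ ?_
    · funext z; simp
    · simp
  inv_mul_cancel a := by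
    refine Wreath.ext ?_ ?_
    · funext z; simp
    · simp

end Wreath

open Classical in
/-- The canonical generating set of the wreath product `G ≀ H` associated with a generating
set `S` of `G` and a generating set `T` of `H`: the elements `(𝟙, t)` for `t ∈ T` and
`(δ_s, e_H)` for `s ∈ S`, where `δ_s` takes the value `s` at `e_H` and `e_G` elsewhere. -/
noncomputable def wreathGens {G H : Type*} [Group G] [Group H] (S : Set G) (T : Set H) :
    Set (Wreath G H) :=
  {w | w.toFun = (fun _ => 1) ∧ w.pos ∈ T} ∪
    {w | w.pos = 1 ∧ ∃ s ∈ S, w.toFun = fun z => if z = 1 then s else 1}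

/-- The generating set `{±1}` of the (multiplicative) group of integers. -/
def zGens : Set (Multiplicative ℤ) :=
  {Multiplicative.ofAdd 1, Multiplicative.ofAdd (-1)}


/-! ### Auxiliary material for the proof -/

section WordAux

variable {Γ : Type*} [Group Γ]

/-- The set defining `wordDist`. -/
def wdSet (S : Set Γ) (x y : Γ) : Set ℕ :=
  {n : ℕ | ∃ l : List Γ, l.length = n ∧ (∀ s ∈ l, s ∈ S) ∧ x⁻¹ * y = l.prod}

/-- `y` is reachable from `x` using letters in `S`. -/
def Reach (S : Set Γ) (x y : Γ) : Prop :=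
  ∃ l : List Γ, (∀ s ∈ l, s ∈ S) ∧ x⁻¹ * y = l.prod

lemma Reach.nonempty {S : Set Γ} {x y : Γ} (h : Reach S x y) : (wdSet S x y).Nonempty := by
  obtain ⟨l, hl, hx⟩ := h
  exact ⟨l.length, l, rfl, hl, hx⟩

lemma wordDist_le_length (S : Set Γ) {x y : Γ} {l : List Γ} (hl : ∀ s ∈ l, s ∈ S)
    (hx : x⁻¹ * y = l.prod) : wordDist S x y ≤ l.length :=
  Nat.sInf_le ⟨l, rfl, hl, hx⟩

lemma exists_wordDist_list {S : Set Γ} {x y : Γ} (h : Reach S x y) :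
    ∃ l : List Γ, (∀ s ∈ l, s ∈ S) ∧ x⁻¹ * y = l.prod ∧ l.length = wordDist S x y := by
  have h2 := Nat.sInf_mem h.nonempty
  obtain ⟨l, hlen, hl, hx⟩ := h2
  exact ⟨l, hl, hx, hlen⟩

@[simp] lemma wordDist_self (S : Set Γ) (x : Γ) : wordDist S x x = 0 :=
  Nat.eq_zero_of_le_zero <| by
    simpa using wordDist_le_length S (l := []) (x := x) (y := x) (by simp) (by simp)

lemma eq_of_wordDist_eq_zero {S : Set Γ} {x y : Γ} (h : Reach S x y)
    (h0 : wordDist S x y = 0) : x = y := by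
  obtain ⟨l, _, hx, hlen⟩ := exists_wordDist_list h
  rw [h0, List.length_eq_zero_iff] at hlen
  subst hlen
  simp only [List.prod_nil] at hx
  exact inv_mul_eq_one.mp hx

lemma Reach.trans {S : Set Γ} {x y z : Γ} (h1 : Reach S x y) (h2 : Reach S y z) :
    Reach S x z := by
  obtain ⟨l1, hl1, he1⟩ := h1
  obtain ⟨l2, hl2, he2⟩ := h2
  refine ⟨l1 ++ l2, ?_, ?_⟩
  · intro s hs
    rcases List.mem_append.mp hs with h | h
    exacts [hl1 s h, hl2 s h]
  · rw [List.prod_append, ← he1, ← he2]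
    group

lemma wordDist_triangle {S : Set Γ} {x y z : Γ} (h1 : Reach S x y) (h2 : Reach S y z) :
    wordDist S x z ≤ wordDist S x y + wordDist S y z := by
  obtain ⟨l1, hl1, he1, hn1⟩ := exists_wordDist_list h1
  obtain ⟨l2, hl2, he2, hn2⟩ := exists_wordDist_list h2
  have hle : wordDist S x z ≤ (l1 ++ l2).length := by
    refine wordDist_le_length S ?_ ?_
    · intro s hs
      rcases List.mem_append.mp hs with h | h
      exacts [hl1 s h, hl2 s h]
    · rw [List.prod_append, ← he1, ← he2]; group
  simpa [hn1, hn2] using hle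

lemma exists_list_of_mem_closure' {S : Set Γ} (hsym : ∀ s ∈ S, s⁻¹ ∈ S) {a : Γ}
    (ha : a ∈ Subgroup.closure S) : ∃ l : List Γ, (∀ s ∈ l, s ∈ S) ∧ a = l.prod := by
  induction ha using Subgroup.closure_induction with
  | mem s hs => exact ⟨[s], by simpa using hs, by simp⟩
  | one => exact ⟨[], by simp, by simp⟩
  | mul x y _ _ ihx ihy =>
    obtain ⟨l1, h1, e1⟩ := ihx
    obtain ⟨l2, h2, e2⟩ := ihy
    refine ⟨l1 ++ l2, ?_, by rw [List.prod_append, e1, e2]⟩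
    intro s hs
    rcases List.mem_append.mp hs with h | h
    exacts [h1 s h, h2 s h]
  | inv x _ ihx =>
    obtain ⟨l, h1, e1⟩ := ihx
    refine ⟨(l.map fun x => x⁻¹).reverse, ?_, by rw [e1, List.prod_inv_reverse]⟩
    intro s hs
    simp only [List.mem_reverse, List.mem_map] at hs
    obtain ⟨a, ha, rfl⟩ := hs
    exact hsym a (h1 a ha)

lemma reach_all {S : Set Γ} (hS : IsSymmGenSet S) (x y : Γ) : Reach S x y := by
  obtain ⟨l, hl, he⟩ := exists_list_of_mem_closure' hS.1 (a := x⁻¹ * y)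
    (by rw [hS.2]; trivial)
  exact ⟨l, hl, he⟩

/-- Generic lower bound: a function on pairs which vanishes on the diagonal and changes by at
most 1 under right multiplication by a generator is dominated by the word distance. -/
lemma le_wordDist {S : Set Γ} {u : Γ} (φ : Γ → ℕ) (h0 : φ u = 0)
    (hstep : ∀ v σ, σ ∈ S → φ (v * σ) ≤ φ v + 1) {v : Γ} (h : Reach S u v) :
    φ v ≤ wordDist S u v := by
  obtain ⟨l, hl, he, hlen⟩ := exists_wordDist_list h
  rw [← hlen]
  have H : ∀ l : List Γ, (∀ s ∈ l, s ∈ S) → ∀ v : Γ, u⁻¹ * v = l.prod → φ v ≤ l.length := by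
    intro l
    induction l using List.reverseRecOn with
    | nil =>
      intro _ v hv
      simp only [List.prod_nil] at hv
      have : u = v := inv_mul_eq_one.mp hv
      subst this
      simp [h0]
    | append_singleton l σ ih =>
      intro hmem v hv
      have hσ : σ ∈ S := hmem σ (by simp)
      have hl' : ∀ s ∈ l, s ∈ S := fun s hs => hmem s (by simp [hs])
      rw [List.prod_append, List.prod_singleton] at hv
      have hv' : v = (u * l.prod) * σ := by
        have h2 : u * (u⁻¹ * v) = u * (l.prod * σ) := by rw [hv]
        simpa [mul_assoc] using h2
      have h1 : u⁻¹ * (u * l.prod) = l.prod := by group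
      calc φ v = φ ((u * l.prod) * σ) := by rw [hv']
        _ ≤ φ (u * l.prod) + 1 := hstep _ σ hσ
        _ ≤ l.length + 1 := by have := ih hl' (u * l.prod) h1; omega
        _ = (l ++ [σ]).length := by simp

  exact H l hl v he

end WordAux

section WreathAux

open Multiplicative

variable {G : Type*} [Group G]

/-- The translation generator of `G ≀ ℤ`. -/
def mvElt (k : ℤ) : Wreath G (Multiplicative ℤ) :=
  ⟨fun _ => 1, ofAdd k, by
    have : Function.mulSupport (fun _ : Multiplicative ℤ => (1 : G)) = ∅ :=
      Function.mulSupport_eq_empty_iff.mpr rfl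
    rw [this]; exact Set.finite_empty⟩

/-- The lamp generator of `G ≀ ℤ`. -/
def lamElt (s : G) : Wreath G (Multiplicative ℤ) :=
  ⟨fun z => if z = 1 then s else 1, 1, by
    apply Set.Finite.subset (Set.finite_singleton (1 : Multiplicative ℤ))
    intro z hz
    simp only [Function.mem_mulSupport] at hz
    simp only [Set.mem_singleton_iff]
    by_contra hne
    exact hz (if_neg hne)⟩

@[simp] lemma mvElt_toFun (k : ℤ) : (mvElt (G := G) k).toFun = fun _ => 1 := rfl

@[simp] lemma mvElt_pos (k : ℤ) : (mvElt (G := G) k).pos = ofAdd k := rfl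

@[simp] lemma lamElt_toFun (s : G) : (lamElt s).toFun = fun z => if z = 1 then s else 1 := rfl

@[simp] lemma lamElt_pos (s : G) : (lamElt s).pos = 1 := rfl

lemma mvElt_mul (a b : ℤ) : (mvElt (G := G) a) * mvElt b = mvElt (a + b) := by
  refine Wreath.ext ?_ ?_
  · funext z; simp
  · simp [ofAdd_add]

@[simp] lemma mvElt_zero : mvElt (G := G) 0 = 1 := by
  refine Wreath.ext ?_ ?_
  · funext z; simp
  · simp

lemma lamElt_mul (a b : G) : lamElt a * lamElt b = lamElt (a * b) := by
  refine Wreath.ext ?_ ?_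
  · funext z
    simp only [Wreath.mul_toFun, lamElt_toFun, lamElt_pos, inv_one, one_mul]
    by_cases hz : z = 1 <;> simp [hz]
  · simp

@[simp] lemma lamElt_one : lamElt (1 : G) = 1 := by
  refine Wreath.ext ?_ ?_
  · funext z; simp
  · simp

lemma mvElt_mem_gens {S : Set G} {k : ℤ} (hk : k = 1 ∨ k = -1) :
    mvElt k ∈ wreathGens S zGens := by
  left
  refine ⟨rfl, ?_⟩
  rcases hk with rfl | rfl
  · left; rfl
  · right; rfl

lemma lamElt_toFun_eq (s : G) :
    (lamElt s).toFun
      = fun z : Multiplicative ℤ => @ite G (z = 1) (Classical.propDecidable _) s 1 := by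
  funext z
  by_cases hz : z = 1 <;> simp [hz]

lemma lamElt_mem_gens {S : Set G} {s : G} (hs : s ∈ S) : lamElt s ∈ wreathGens S zGens := by
  right
  exact ⟨rfl, s, hs, lamElt_toFun_eq s⟩

lemma gens_cases {S : Set G} {σ : Wreath G (Multiplicative ℤ)} (hσ : σ ∈ wreathGens S zGens) :
    σ = mvElt 1 ∨ σ = mvElt (-1) ∨ ∃ s ∈ S, σ = lamElt s := by
  rcases hσ with ⟨h1, h2⟩ | ⟨h1, s, hs, h2⟩
  · rcases h2 with h2 | h2
    · exact Or.inl (Wreath.ext h1 h2)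
    · exact Or.inr (Or.inl (Wreath.ext h1 h2))
  · exact Or.inr (Or.inr ⟨s, hs, Wreath.ext (h2.trans (lamElt_toFun_eq s).symm) h1⟩)

lemma mul_mvElt_toFun (v : Wreath G (Multiplicative ℤ)) (k : ℤ) :
    (v * mvElt k).toFun = v.toFun := by
  funext z; simp

lemma mul_mvElt_pos (v : Wreath G (Multiplicative ℤ)) (k : ℤ) :
    (v * mvElt k).pos = v.pos * ofAdd k := rfl

lemma mul_lamElt_pos (v : Wreath G (Multiplicative ℤ)) (s : G) :
    (v * lamElt s).pos = v.pos := by simp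

lemma mul_lamElt_toFun (v : Wreath G (Multiplicative ℤ)) (s : G) :
    (v * lamElt s).toFun = fun z => if z = v.pos then v.toFun z * s else v.toFun z := by
  funext z
  simp only [Wreath.mul_toFun, lamElt_toFun]
  by_cases hz : z = v.pos
  · subst hz
    rw [if_pos (by group), if_pos rfl]
  · rw [if_neg fun hc => hz (by simpa [eq_comm] using inv_mul_eq_one.mp hc), if_neg hz, mul_one]

end WreathAux


section Quantities

open Multiplicative

variable {G : Type*} [Group G]

/-- Positions where two wreath elements' lamp configurations differ. -/
def diffSet (u v : Wreath G (Multiplicative ℤ)) : Set (Multiplicative ℤ) :=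
  {z | u.toFun z ≠ v.toFun z}

lemma diffSet_finite (u v : Wreath G (Multiplicative ℤ)) : (diffSet u v).Finite := by
  apply Set.Finite.subset (u.finsupp.union v.finsupp)
  intro z hz
  rw [Set.mem_union, Function.mem_mulSupport, Function.mem_mulSupport]
  by_contra hc
  push_neg at hc
  exact hz (hc.1.trans hc.2.symm)

/-- The lamp configuration to the right of `t`. -/
def tailR (t : ℤ) (u : Wreath G (Multiplicative ℤ)) : Multiplicative ℤ → G :=
  fun z => if t < toAdd z then u.toFun z else 1

/-- The lamp configuration to the left of `t`. -/
def tailL (t : ℤ) (u : Wreath G (Multiplicative ℤ)) : Multiplicative ℤ → G :=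
  fun z => if toAdd z < t then u.toFun z else 1

lemma tailR_ne_iff {t : ℤ} {u v : Wreath G (Multiplicative ℤ)} :
    tailR t u ≠ tailR t v ↔ ∃ z, t < toAdd z ∧ u.toFun z ≠ v.toFun z := by
  constructor
  · intro h
    by_contra hc
    push_neg at hc
    apply h
    funext z
    unfold tailR
    split_ifs with ht
    · exact hc z ht
    · rfl
  · rintro ⟨z, ht, hne⟩ h
    apply hne
    have h2 := congrFun h z
    simpa [tailR, ht] using h2

lemma tailL_ne_iff {t : ℤ} {u v : Wreath G (Multiplicative ℤ)} :
    tailL t u ≠ tailL t v ↔ ∃ z, toAdd z < t ∧ u.toFun z ≠ v.toFun z := by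
  constructor
  · intro h
    by_contra hc
    push_neg at hc
    apply h
    funext z
    unfold tailL
    split_ifs with ht
    · exact hc z ht
    · rfl
  · rintro ⟨z, ht, hne⟩ h
    apply hne
    have h2 := congrFun h z
    simpa [tailL, ht] using h2

/-- The set counted by the quantity `A`. -/
def setA (u v : Wreath G (Multiplicative ℤ)) : Set ℤ :=
  {t | toAdd u.pos ≤ t ∧ toAdd v.pos ≤ t ∧ tailR t u ≠ tailR t v}

/-- The set counted by the quantity `B`. -/
def setB (u v : Wreath G (Multiplicative ℤ)) : Set ℤ :=
  {t | t ≤ toAdd u.pos ∧ t ≤ toAdd v.pos ∧ tailL t u ≠ tailL t v}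

lemma setA_finite (u v : Wreath G (Multiplicative ℤ)) : (setA u v).Finite := by
  apply Set.Finite.subset (Set.Finite.biUnion (diffSet_finite u v)
    (fun z _ => Set.finite_Ico (toAdd u.pos) (toAdd z)))
  rintro t ⟨h1, h2, h3⟩
  obtain ⟨z, ht, hz⟩ := tailR_ne_iff.mp h3
  exact Set.mem_biUnion hz ⟨h1, ht⟩

lemma setB_finite (u v : Wreath G (Multiplicative ℤ)) : (setB u v).Finite := by
  apply Set.Finite.subset (Set.Finite.biUnion (diffSet_finite u v)
    (fun z _ => Set.finite_Ioc (toAdd z) (toAdd u.pos)))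
  rintro t ⟨h1, h2, h3⟩
  obtain ⟨z, ht, hz⟩ := tailL_ne_iff.mp h3
  exact Set.mem_biUnion hz ⟨ht, h1⟩

/-- Quantity `A`: how far to the right of both cursors the configurations differ. -/
noncomputable def qA (u v : Wreath G (Multiplicative ℤ)) : ℕ := (setA u v).ncard

/-- Quantity `B`: how far to the left of both cursors the configurations differ. -/
noncomputable def qB (u v : Wreath G (Multiplicative ℤ)) : ℕ := (setB u v).ncard

/-- Quantity `D`: distance between the cursors. -/
def qD (u v : Wreath G (Multiplicative ℤ)) : ℕ := (toAdd u.pos - toAdd v.pos).natAbs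

/-- Quantity `Σ`: total lamp-fixing cost. -/
noncomputable def qS (S : Set G) (u v : Wreath G (Multiplicative ℤ)) : ℕ :=
  ∑ᶠ z, wordDist S (u.toFun z) (v.toFun z)

lemma qS_eq_sum (S : Set G) {u v : Wreath G (Multiplicative ℤ)}
    {T : Finset (Multiplicative ℤ)} (hT : ∀ z, u.toFun z ≠ v.toFun z → z ∈ T) :
    qS S u v = ∑ z ∈ T, wordDist S (u.toFun z) (v.toFun z) := by
  apply finsum_eq_finset_sum_of_support_subset
  intro z hz
  rw [Function.mem_support] at hz
  by_contra hc
  apply hz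
  have : u.toFun z = v.toFun z := by
    by_contra hne
    exact hc (hT z hne)
  rw [this, wordDist_self]

@[simp] lemma qA_self (u : Wreath G (Multiplicative ℤ)) : qA u u = 0 := by
  have : setA u u = ∅ := by
    ext t
    simp [setA]
  simp [qA, this]

@[simp] lemma qB_self (u : Wreath G (Multiplicative ℤ)) : qB u u = 0 := by
  have : setB u u = ∅ := by
    ext t
    simp [setB]
  simp [qB, this]

@[simp] lemma qD_self (u : Wreath G (Multiplicative ℤ)) : qD u u = 0 := by
  simp [qD]

@[simp] lemma qS_self (S : Set G) (u : Wreath G (Multiplicative ℤ)) : qS S u u = 0 := by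
  apply finsum_eq_zero_of_forall_eq_zero
  intro z
  simp

lemma qD_step (u v σ : Wreath G (Multiplicative ℤ)) {S : Set G}
    (hσ : σ ∈ wreathGens S zGens) : qD u (v * σ) ≤ qD u v + 1 := by
  rcases gens_cases hσ with rfl | rfl | ⟨s, _, rfl⟩
  · unfold qD
    rw [mul_mvElt_pos, toAdd_mul, toAdd_ofAdd]
    omega
  · unfold qD
    rw [mul_mvElt_pos, toAdd_mul, toAdd_ofAdd]
    omega
  · unfold qD
    rw [mul_lamElt_pos]
    omega

lemma qS_step {S : Set G} (hS : IsSymmGenSet S) (u v σ : Wreath G (Multiplicative ℤ))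
    (hσ : σ ∈ wreathGens S zGens) : qS S u (v * σ) ≤ qS S u v + 1 := by
  rcases gens_cases hσ with rfl | rfl | ⟨s, hs, rfl⟩
  · have : qS S u (v * mvElt 1) = qS S u v := by
      unfold qS
      rw [mul_mvElt_toFun]
    omega
  · have : qS S u (v * mvElt (-1)) = qS S u v := by
      unfold qS
      rw [mul_mvElt_toFun]
    omega
  · classical
    set T : Finset (Multiplicative ℤ) :=
      insert v.pos ((diffSet_finite u v).toFinset) with hTdef
    have hpos : v.pos ∈ T := Finset.mem_insert_self _ _
    have h1 : qS S u (v * lamElt s) =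
        ∑ z ∈ T, wordDist S (u.toFun z) ((v * lamElt s).toFun z) := by
      apply qS_eq_sum
      intro z hz
      by_cases hzp : z = v.pos
      · rw [hzp]; exact hpos
      · apply Finset.mem_insert_of_mem
        rw [Set.Finite.mem_toFinset]
        rw [mul_lamElt_toFun] at hz
        simp only [if_neg hzp] at hz
        exact hz
    have h2 : qS S u v = ∑ z ∈ T, wordDist S (u.toFun z) (v.toFun z) := by
      apply qS_eq_sum
      intro z hz
      exact Finset.mem_insert_of_mem (by rwa [Set.Finite.mem_toFinset])
    rw [h1, h2]
    rw [← Finset.add_sum_erase _ _ hpos, ← Finset.add_sum_erase _ _ hpos]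
    have heq : ∑ z ∈ T.erase v.pos, wordDist S (u.toFun z) ((v * lamElt s).toFun z)
        = ∑ z ∈ T.erase v.pos, wordDist S (u.toFun z) (v.toFun z) := by
      apply Finset.sum_congr rfl
      intro z hz
      rw [mul_lamElt_toFun]
      simp only [if_neg (Finset.ne_of_mem_erase hz)]
    rw [heq]
    have hterm : wordDist S (u.toFun v.pos) ((v * lamElt s).toFun v.pos)
        ≤ wordDist S (u.toFun v.pos) (v.toFun v.pos) + 1 := by
      rw [mul_lamElt_toFun]
      beta_reduce
      rw [if_pos rfl]
      have htri := wordDist_triangle (S := S)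
        (reach_all hS (u.toFun v.pos) (v.toFun v.pos))
        (reach_all hS (v.toFun v.pos) (v.toFun v.pos * s))
      have hone : wordDist S (v.toFun v.pos) (v.toFun v.pos * s) ≤ 1 := by
        have := wordDist_le_length S (l := [s]) (x := v.toFun v.pos)
          (y := v.toFun v.pos * s) (by simpa using hs) (by simp)
        simpa using this
      omega
    omega

lemma tailR_mul_lamElt {t : ℤ} {v : Wreath G (Multiplicative ℤ)} {s : G}
    (ht : toAdd v.pos ≤ t) : tailR t (v * lamElt s) = tailR t v := by
  funext z
  unfold tailR
  split_ifs with h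
  · rw [mul_lamElt_toFun]
    beta_reduce
    rw [if_neg]
    intro hc
    rw [hc] at h
    omega
  · rfl

lemma tailL_mul_lamElt {t : ℤ} {v : Wreath G (Multiplicative ℤ)} {s : G}
    (ht : t ≤ toAdd v.pos) : tailL t (v * lamElt s) = tailL t v := by
  funext z
  unfold tailL
  split_ifs with h
  · rw [mul_lamElt_toFun]
    beta_reduce
    rw [if_neg]
    intro hc
    rw [hc] at h
    omega
  · rfl

lemma tailR_mul_mvElt (t k : ℤ) (v : Wreath G (Multiplicative ℤ)) :
    tailR t (v * mvElt k) = tailR t v := by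
  funext z
  unfold tailR
  rw [mul_mvElt_toFun]

lemma tailL_mul_mvElt (t k : ℤ) (v : Wreath G (Multiplicative ℤ)) :
    tailL t (v * mvElt k) = tailL t v := by
  funext z
  unfold tailL
  rw [mul_mvElt_toFun]

lemma qA_step (u v σ : Wreath G (Multiplicative ℤ)) {S : Set G}
    (hσ : σ ∈ wreathGens S zGens) : qA u (v * σ) ≤ qA u v + 1 := by
  rcases gens_cases hσ with rfl | rfl | ⟨s, _, rfl⟩
  · have hsub : setA u (v * mvElt 1) ⊆ setA u v := by
      rintro t ⟨h1, h2, h3⟩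
      rw [mul_mvElt_pos, toAdd_mul, toAdd_ofAdd] at h2
      rw [tailR_mul_mvElt] at h3
      exact ⟨h1, by omega, h3⟩
    calc qA u (v * mvElt 1) ≤ qA u v := Set.ncard_le_ncard hsub (setA_finite u v)
      _ ≤ qA u v + 1 := Nat.le_succ _
  · have hsub : setA u (v * mvElt (-1)) ⊆ insert (toAdd v.pos - 1) (setA u v) := by
      rintro t ⟨h1, h2, h3⟩
      rw [mul_mvElt_pos, toAdd_mul, toAdd_ofAdd] at h2
      rw [tailR_mul_mvElt] at h3
      by_cases hteq : t = toAdd v.pos - 1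
      · exact Set.mem_insert_iff.mpr (Or.inl hteq)
      · exact Set.mem_insert_iff.mpr (Or.inr ⟨h1, by omega, h3⟩)
    calc qA u (v * mvElt (-1)) ≤ (insert (toAdd v.pos - 1) (setA u v)).ncard :=
          Set.ncard_le_ncard hsub ((setA_finite u v).insert _)
      _ ≤ qA u v + 1 := Set.ncard_insert_le _ _
  · have heq : setA u (v * lamElt s) = setA u v := by
      ext t
      simp only [setA, Set.mem_setOf_eq, mul_lamElt_pos]
      constructor
      · rintro ⟨h1, h2, h3⟩
        exact ⟨h1, h2, by rwa [tailR_mul_lamElt h2] at h3⟩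
      · rintro ⟨h1, h2, h3⟩
        exact ⟨h1, h2, by rwa [tailR_mul_lamElt h2]⟩
    unfold qA
    rw [heq]
    omega

lemma qB_step (u v σ : Wreath G (Multiplicative ℤ)) {S : Set G}
    (hσ : σ ∈ wreathGens S zGens) : qB u (v * σ) ≤ qB u v + 1 := by
  rcases gens_cases hσ with rfl | rfl | ⟨s, _, rfl⟩
  · have hsub : setB u (v * mvElt 1) ⊆ insert (toAdd v.pos + 1) (setB u v) := by
      rintro t ⟨h1, h2, h3⟩
      rw [mul_mvElt_pos, toAdd_mul, toAdd_ofAdd] at h2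
      rw [tailL_mul_mvElt] at h3
      by_cases hteq : t = toAdd v.pos + 1
      · exact Set.mem_insert_iff.mpr (Or.inl hteq)
      · exact Set.mem_insert_iff.mpr (Or.inr ⟨h1, by omega, h3⟩)
    calc qB u (v * mvElt 1) ≤ (insert (toAdd v.pos + 1) (setB u v)).ncard :=
          Set.ncard_le_ncard hsub ((setB_finite u v).insert _)
      _ ≤ qB u v + 1 := Set.ncard_insert_le _ _
  · have hsub : setB u (v * mvElt (-1)) ⊆ setB u v := by
      rintro t ⟨h1, h2, h3⟩
      rw [mul_mvElt_pos, toAdd_mul, toAdd_ofAdd] at h2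
      rw [tailL_mul_mvElt] at h3
      exact ⟨h1, by omega, h3⟩
    calc qB u (v * mvElt (-1)) ≤ qB u v := Set.ncard_le_ncard hsub (setB_finite u v)
      _ ≤ qB u v + 1 := Nat.le_succ _
  · have heq : setB u (v * lamElt s) = setB u v := by
      ext t
      simp only [setB, Set.mem_setOf_eq, mul_lamElt_pos]
      constructor
      · rintro ⟨h1, h2, h3⟩
        exact ⟨h1, h2, by rwa [tailL_mul_lamElt h2] at h3⟩
      · rintro ⟨h1, h2, h3⟩
        exact ⟨h1, h2, by rwa [tailL_mul_lamElt h2]⟩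
    unfold qB
    rw [heq]
    omega

/-- All four quantities are dominated by the word distance on the wreath product. -/
lemma quantities_le_wordDist {S : Set G} (hS : IsSymmGenSet S)
    {u v : Wreath G (Multiplicative ℤ)} (hreach : Reach (wreathGens S zGens) u v) :
    qA u v ≤ wordDist (wreathGens S zGens) u v ∧
    qB u v ≤ wordDist (wreathGens S zGens) u v ∧
    qD u v ≤ wordDist (wreathGens S zGens) u v ∧
    qS S u v ≤ wordDist (wreathGens S zGens) u v := by
  refine ⟨?_, ?_, ?_, ?_⟩
  · exact le_wordDist (fun v => qA u v) (by simp) (fun v σ hσ => qA_step u v σ hσ) hreach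
  · exact le_wordDist (fun v => qB u v) (by simp) (fun v σ hσ => qB_step u v σ hσ) hreach
  · exact le_wordDist (fun v => qD u v) (by simp) (fun v σ hσ => qD_step u v σ hσ) hreach
  · exact le_wordDist (fun v => qS S u v) (by simp) (fun v σ hσ => qS_step hS u v σ hσ) hreach

end Quantities


section Sweep

open Multiplicative

variable {G : Type*} [Group G]

lemma mv_word (S : Set G) (k : ℤ) :
    ∃ l : List (Wreath G (Multiplicative ℤ)),
      (∀ σ ∈ l, σ ∈ wreathGens S zGens) ∧ l.prod = mvElt k ∧ l.length = k.natAbs := by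
  induction k using Int.induction_on with
  | zero => exact ⟨[], by simp, by simp, by simp⟩
  | succ n ih =>
    obtain ⟨l, h1, h2, h3⟩ := ih
    refine ⟨l ++ [mvElt 1], ?_, ?_, ?_⟩
    · intro σ hσ
      rcases List.mem_append.mp hσ with h | h
      · exact h1 σ h
      · rw [List.mem_singleton] at h
        subst h
        exact mvElt_mem_gens (Or.inl rfl)
    · rw [List.prod_append, h2, List.prod_singleton, mvElt_mul]
    · simp only [List.length_append, List.length_singleton, h3]
      omega
  | pred n ih =>
    obtain ⟨l, h1, h2, h3⟩ := ih
    refine ⟨l ++ [mvElt (-1)], ?_, ?_, ?_⟩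
    · intro σ hσ
      rcases List.mem_append.mp hσ with h | h
      · exact h1 σ h
      · rw [List.mem_singleton] at h
        subst h
        exact mvElt_mem_gens (Or.inr rfl)
    · rw [List.prod_append, h2, List.prod_singleton, mvElt_mul]
      congr 1 <;> ring
    · simp only [List.length_append, List.length_singleton, h3]
      omega

lemma lam_word {S : Set G} (hS : IsSymmGenSet S) (a : G) :
    ∃ l : List (Wreath G (Multiplicative ℤ)),
      (∀ σ ∈ l, σ ∈ wreathGens S zGens) ∧ l.prod = lamElt a ∧
        l.length = wordDist S 1 a := by
  obtain ⟨la, hla, he, hlen⟩ := exists_wordDist_list (reach_all hS 1 a)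
  rw [inv_one, one_mul] at he
  refine ⟨la.map lamElt, ?_, ?_, by simpa using hlen⟩
  · intro σ hσ
    simp only [List.mem_map] at hσ
    obtain ⟨s, hs, rfl⟩ := hσ
    exact lamElt_mem_gens (hla s hs)
  · have hmap : ∀ lb : List G, (lb.map lamElt).prod = lamElt lb.prod := by
      intro lb
      induction lb with
      | nil => simp
      | cons x xs ih => simp [ih, lamElt_mul]
    rw [hmap, ← he]

/-- The element realized by a rightward lamp-setting sweep. -/
def sweepTarget (f : Multiplicative ℤ → G) (c : ℤ) (k : ℕ) : Wreath G (Multiplicative ℤ) :=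
  ⟨fun z => if 0 ≤ toAdd z ∧ toAdd z < (k : ℤ) then f (ofAdd (toAdd z + c)) else 1,
    ofAdd (k : ℤ), by
    apply Set.Finite.subset ((Set.finite_Ico (0 : ℤ) (k : ℤ)).preimage
      (Function.Injective.injOn (fun a b hab => Multiplicative.toAdd.injective hab)))
    intro z hz
    rw [Function.mem_mulSupport] at hz
    by_contra hc
    apply hz
    refine if_neg ?_
    simpa [Set.mem_Ico] using hc⟩

@[simp] lemma sweepTarget_toFun (f : Multiplicative ℤ → G) (c : ℤ) (k : ℕ) :
    (sweepTarget f c k).toFun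
      = fun z => if 0 ≤ toAdd z ∧ toAdd z < (k : ℤ) then f (ofAdd (toAdd z + c)) else 1 := rfl

@[simp] lemma sweepTarget_pos (f : Multiplicative ℤ → G) (c : ℤ) (k : ℕ) :
    (sweepTarget f c k).pos = ofAdd (k : ℤ) := rfl

lemma sweepTarget_zero (f : Multiplicative ℤ → G) (c : ℤ) : sweepTarget f c 0 = 1 := by
  refine Wreath.ext ?_ ?_
  · funext z
    simp only [sweepTarget_toFun, Wreath.one_toFun]
    rw [if_neg]
    omega
  · simp

lemma sweep_succ (f : Multiplicative ℤ → G) (c : ℤ) (k : ℕ) :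
    lamElt (f (ofAdd c)) * mvElt 1 * sweepTarget f (c + 1) k = sweepTarget f c (k + 1) := by
  refine Wreath.ext ?_ ?_
  · funext z
    simp only [Wreath.mul_toFun, Wreath.mul_pos', lamElt_toFun, lamElt_pos, mvElt_toFun,
      mvElt_pos, sweepTarget_toFun, mul_one, one_mul]
    have harg : toAdd ((ofAdd (1 : ℤ))⁻¹ * z) = toAdd z - 1 := by
      simp [sub_eq_neg_add]
    rw [harg]
    by_cases hz : z = 1
    · subst hz
      rw [if_pos rfl]
      simp only [toAdd_one]
      rw [if_neg (by omega), if_pos (by constructor <;> omega), mul_one]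
      congr 1
      rw [zero_add]
    · rw [if_neg hz]
      have hz0 : toAdd z ≠ 0 := fun hc => hz (by
        have := congrArg (Multiplicative.ofAdd) hc
        simpa using this)
      rw [one_mul]
      by_cases hin : 0 ≤ toAdd z - 1 ∧ toAdd z - 1 < (k : ℤ)
      · rw [if_pos hin, if_pos (by push_cast; omega)]
        congr 1
        ring
      · rw [if_neg hin, if_neg (by push_cast; omega)]
  · simp only [Wreath.mul_pos', lamElt_pos, mvElt_pos, sweepTarget_pos, one_mul]
    rw [← ofAdd_add]
    congr 1
    push_cast
    ring

lemma sweep_word {S : Set G} (hS : IsSymmGenSet S) (f : Multiplicative ℤ → G) :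
    ∀ (k : ℕ) (c : ℤ),
      ∃ l : List (Wreath G (Multiplicative ℤ)),
        (∀ σ ∈ l, σ ∈ wreathGens S zGens) ∧ l.prod = sweepTarget f c k ∧
          l.length = k + ∑ i ∈ Finset.range k, wordDist S 1 (f (ofAdd (c + i))) := by
  intro k
  induction k with
  | zero =>
    intro c
    exact ⟨[], by simp, by rw [List.prod_nil, sweepTarget_zero], by simp⟩
  | succ k ih =>
    intro c
    obtain ⟨l, h1, h2, h3⟩ := ih (c + 1)
    obtain ⟨ll, g1, g2, g3⟩ := lam_word hS (f (ofAdd c))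
    refine ⟨ll ++ [mvElt 1] ++ l, ?_, ?_, ?_⟩
    · intro σ hσ
      rcases List.mem_append.mp hσ with h | h
      · rcases List.mem_append.mp h with h' | h'
        · exact g1 σ h'
        · rw [List.mem_singleton] at h'
          subst h'
          exact mvElt_mem_gens (Or.inl rfl)
      · exact h1 σ h
    · rw [List.prod_append, List.prod_append, List.prod_singleton, g2, h2, sweep_succ]
    · simp only [List.length_append, List.length_singleton, g3, h3]
      rw [Finset.sum_range_succ']
      push_cast
      simp only [add_zero]
      have hsum : ∑ i ∈ Finset.range k, wordDist S 1 (f (ofAdd (c + ((i : ℤ) + 1))))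
          = ∑ i ∈ Finset.range k, wordDist S 1 (f (ofAdd (c + 1 + (i : ℤ)))) := by
        apply Finset.sum_congr rfl
        intro i _
        congr 2
        ring
      rw [hsum]
      omega

end Sweep


section Assembly

open Multiplicative

variable {G : Type*} [Group G]

lemma exists_word_one {S : Set G} (hS : IsSymmGenSet S) (w : Wreath G (Multiplicative ℤ)) :
    ∃ l : List (Wreath G (Multiplicative ℤ)),
      (∀ σ ∈ l, σ ∈ wreathGens S zGens) ∧ l.prod = w ∧
        l.length ≤ 3 * (qD 1 w + qA 1 w + qB 1 w) + qS S 1 w + 2 := by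
  classical
  set f := w.toFun with hf
  set p := toAdd w.pos with hp
  set P : Finset ℤ := insert 0 (insert p ((w.finsupp.toFinset).image fun z => toAdd z)) with hP
  have hPne : P.Nonempty := ⟨0, by simp [hP]⟩
  set r := P.max' hPne with hr
  set ℓ := P.min' hPne with hℓ
  have h0r : (0 : ℤ) ≤ r := P.le_max' 0 (by simp [hP])
  have hℓ0 : ℓ ≤ 0 := P.min'_le 0 (by simp [hP])
  have hpr : p ≤ r := P.le_max' p (by simp [hP])
  have hℓp : ℓ ≤ p := P.min'_le p (by simp [hP])
  have hsupp : ∀ z, f z ≠ 1 → ℓ ≤ toAdd z ∧ toAdd z ≤ r := by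
    intro z hz
    have hzP : toAdd z ∈ P := by
      simp only [hP, Finset.mem_insert, Finset.mem_image]
      right; right
      exact ⟨z, by rw [Set.Finite.mem_toFinset]; exact hz, rfl⟩
    exact ⟨P.min'_le _ hzP, P.le_max' _ hzP⟩
  set k : ℕ := (r - ℓ + 1).toNat with hk
  have hkz : (k : ℤ) = r - ℓ + 1 := by
    rw [hk]
    exact Int.toNat_of_nonneg (by omega)
  obtain ⟨l1, m1, p1, n1⟩ := mv_word S ℓ
  obtain ⟨l2, m2, p2, n2⟩ := sweep_word hS f k ℓ
  obtain ⟨l3, m3, p3, n3⟩ := mv_word S (p - ℓ - k)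
  refine ⟨l1 ++ l2 ++ l3, ?_, ?_, ?_⟩
  · intro σ hσ
    rcases List.mem_append.mp hσ with h | h
    · rcases List.mem_append.mp h with h' | h'
      · exact m1 σ h'
      · exact m2 σ h'
    · exact m3 σ h
  · rw [List.prod_append, List.prod_append, p1, p2, p3]
    refine Wreath.ext ?_ ?_
    · funext z
      simp only [Wreath.mul_toFun, Wreath.mul_pos', mvElt_toFun, mvElt_pos, sweepTarget_toFun,
        one_mul, mul_one]
      have harg : toAdd ((ofAdd ℓ)⁻¹ * z) = toAdd z - ℓ := by simp [sub_eq_neg_add]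
      rw [harg]
      by_cases hin : 0 ≤ toAdd z - ℓ ∧ toAdd z - ℓ < (k : ℤ)
      · rw [if_pos hin]
        congr 1
        rw [sub_add_cancel, ofAdd_toAdd]
      · rw [if_neg hin]
        by_contra hc
        have hne : f z ≠ 1 := fun hfz => hc hfz.symm
        have := hsupp z hne
        omega
    · simp only [Wreath.mul_pos', mvElt_pos, sweepTarget_pos]
      rw [← ofAdd_add, ← ofAdd_add]
      have harith : ℓ + (k : ℤ) + (p - ℓ - k) = p := by ring
      rw [harith, hp, ofAdd_toAdd]
  · -- length bound
    have hsum : ∑ i ∈ Finset.range k, wordDist S 1 (f (ofAdd (ℓ + (i : ℤ)))) = qS S 1 w := by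
      set T : Finset (Multiplicative ℤ) :=
        (Finset.range k).image (fun i : ℕ => ofAdd (ℓ + (i : ℤ))) with hT
      have hqs : qS S 1 w = ∑ z ∈ T, wordDist S ((1 : Wreath G (Multiplicative ℤ)).toFun z)
          (w.toFun z) := by
        apply qS_eq_sum
        intro z hz
        simp only [Wreath.one_toFun] at hz
        have hne : f z ≠ 1 := fun hfz => hz hfz.symm
        obtain ⟨hz1, hz2⟩ := hsupp z hne
        simp only [hT, Finset.mem_image, Finset.mem_range]
        refine ⟨(toAdd z - ℓ).toNat, by omega, ?_⟩
        have : ℓ + ((toAdd z - ℓ).toNat : ℤ) = toAdd z := by omega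
        rw [this, ofAdd_toAdd]
      rw [hqs, hT, Finset.sum_image]
      · apply Finset.sum_congr rfl
        intro i _
        simp only [Wreath.one_toFun]
        rfl
      · intro a _ b _ hab
        have := congrArg (fun x => Multiplicative.toAdd x) hab
        simp only [toAdd_ofAdd] at this
        omega
    have hA : (r - max 0 p).toNat ≤ qA 1 w := by
      by_cases hcase : r ≤ max 0 p
      · have hz : (r - max 0 p).toNat = 0 := by omega
        rw [hz]
        exact Nat.zero_le _
      · push_neg at hcase
        have hrP : r ∈ P := P.max'_mem hPne
        have hex : ∃ z0, f z0 ≠ 1 ∧ toAdd z0 = r := by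
          simp only [hP, Finset.mem_insert, Finset.mem_image] at hrP
          rcases hrP with h | h | ⟨z0, hz0, he⟩
          · omega
          · omega
          · rw [Set.Finite.mem_toFinset, Function.mem_mulSupport] at hz0
            exact ⟨z0, hz0, he⟩
        obtain ⟨z0, hz01, hz0r⟩ := hex
        have hsub : Set.Ico (max 0 p) r ⊆ setA 1 w := by
          intro t ht
          simp only [Set.mem_Ico] at ht
          refine ⟨?_, ?_, ?_⟩
          · simp only [Wreath.one_pos', toAdd_one]
            omega
          · omega
          · rw [tailR_ne_iff]
            refine ⟨z0, by omega, ?_⟩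
            simp only [Wreath.one_toFun]
            exact fun hc => hz01 hc.symm
        calc (r - max 0 p).toNat = (Set.Ico (max 0 p) r).ncard := by
              rw [← Finset.coe_Ico, Set.ncard_coe_finset, Int.card_Ico]
          _ ≤ qA 1 w := Set.ncard_le_ncard hsub (setA_finite 1 w)
    have hB : (min 0 p - ℓ).toNat ≤ qB 1 w := by
      by_cases hcase : min 0 p ≤ ℓ
      · have hz : (min 0 p - ℓ).toNat = 0 := by omega
        rw [hz]
        exact Nat.zero_le _
      · push_neg at hcase
        have hℓP : ℓ ∈ P := P.min'_mem hPne
        have hex : ∃ z0, f z0 ≠ 1 ∧ toAdd z0 = ℓ := by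
          simp only [hP, Finset.mem_insert, Finset.mem_image] at hℓP
          rcases hℓP with h | h | ⟨z0, hz0, he⟩
          · omega
          · omega
          · rw [Set.Finite.mem_toFinset, Function.mem_mulSupport] at hz0
            exact ⟨z0, hz0, he⟩
        obtain ⟨z0, hz01, hz0ℓ⟩ := hex
        have hsub : Set.Ioc ℓ (min 0 p) ⊆ setB 1 w := by
          intro t ht
          simp only [Set.mem_Ioc] at ht
          refine ⟨?_, ?_, ?_⟩
          · simp only [Wreath.one_pos', toAdd_one]
            omega
          · omega
          · rw [tailL_ne_iff]
            refine ⟨z0, by omega, ?_⟩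
            simp only [Wreath.one_toFun]
            exact fun hc => hz01 hc.symm
        calc (min 0 p - ℓ).toNat = (Set.Ioc ℓ (min 0 p)).ncard := by
              rw [← Finset.coe_Ioc, Set.ncard_coe_finset, Int.card_Ioc]
          _ ≤ qB 1 w := Set.ncard_le_ncard hsub (setB_finite 1 w)
    have hD : qD 1 w = p.natAbs := by
      simp [qD, hp]
    rw [List.length_append, List.length_append, n1, n2, n3, hsum]
    omega

lemma reach_wreath {S : Set G} (hS : IsSymmGenSet S) (u v : Wreath G (Multiplicative ℤ)) :
    Reach (wreathGens S zGens) u v := by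
  obtain ⟨l, hm, hp, _⟩ := exists_word_one hS (u⁻¹ * v)
  exact ⟨l, hm, hp.symm⟩

lemma wordDist_base {Γ : Type*} [Group Γ] (S : Set Γ) (x y : Γ) :
    wordDist S 1 (x⁻¹ * y) = wordDist S x y := by
  unfold wordDist
  congr 1
  ext n
  simp only [inv_one, one_mul]

lemma toFun_inv_mul (u v : Wreath G (Multiplicative ℤ)) (z : Multiplicative ℤ) :
    (u⁻¹ * v).toFun z = (u.toFun (u.pos * z))⁻¹ * v.toFun (u.pos * z) := by
  simp [Wreath.mul_toFun, Wreath.inv_toFun, Wreath.inv_pos']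

lemma qD_inv_mul (u v : Wreath G (Multiplicative ℤ)) : qD 1 (u⁻¹ * v) = qD u v := by
  simp only [qD, Wreath.mul_pos', Wreath.inv_pos', Wreath.one_pos', toAdd_one, toAdd_mul,
    toAdd_inv]
  omega

lemma qA_inv_mul (u v : Wreath G (Multiplicative ℤ)) : qA 1 (u⁻¹ * v) = qA u v := by
  have himg : setA 1 (u⁻¹ * v) = (fun t => t - toAdd u.pos) '' setA u v := by
    ext t
    simp only [setA, Set.mem_setOf_eq, Set.mem_image, Wreath.one_pos', toAdd_one,
      Wreath.mul_pos', Wreath.inv_pos', toAdd_mul, toAdd_inv]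
    constructor
    · rintro ⟨h1, h2, h3⟩
      refine ⟨t + toAdd u.pos, ⟨?_, ?_, ?_⟩, by ring⟩
      · omega
      · omega
      · rw [tailR_ne_iff] at h3 ⊢
        obtain ⟨z, hz1, hz2⟩ := h3
        refine ⟨u.pos * z, by rw [toAdd_mul]; omega, ?_⟩
        intro hc
        apply hz2
        simp only [Wreath.one_toFun, toFun_inv_mul, hc]
        simp
    · rintro ⟨t', ⟨h1, h2, h3⟩, rfl⟩
      refine ⟨by omega, by omega, ?_⟩
      rw [tailR_ne_iff] at h3 ⊢
      obtain ⟨z, hz1, hz2⟩ := h3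
      refine ⟨u.pos⁻¹ * z, by rw [toAdd_mul, toAdd_inv]; omega, ?_⟩
      simp only [Wreath.one_toFun, toFun_inv_mul, mul_inv_cancel_left]
      intro hc
      exact hz2 (inv_mul_eq_one.mp hc.symm)
  rw [qA, qA, himg, Set.ncard_image_of_injective _ (fun a b hab => by
    simpa using sub_left_injective hab)]

lemma qB_inv_mul (u v : Wreath G (Multiplicative ℤ)) : qB 1 (u⁻¹ * v) = qB u v := by
  have himg : setB 1 (u⁻¹ * v) = (fun t => t - toAdd u.pos) '' setB u v := by
    ext t
    simp only [setB, Set.mem_setOf_eq, Set.mem_image, Wreath.one_pos', toAdd_one,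
      Wreath.mul_pos', Wreath.inv_pos', toAdd_mul, toAdd_inv]
    constructor
    · rintro ⟨h1, h2, h3⟩
      refine ⟨t + toAdd u.pos, ⟨?_, ?_, ?_⟩, by ring⟩
      · omega
      · omega
      · rw [tailL_ne_iff] at h3 ⊢
        obtain ⟨z, hz1, hz2⟩ := h3
        refine ⟨u.pos * z, by rw [toAdd_mul]; omega, ?_⟩
        intro hc
        apply hz2
        simp only [Wreath.one_toFun, toFun_inv_mul, hc]
        simp
    · rintro ⟨t', ⟨h1, h2, h3⟩, rfl⟩
      refine ⟨by omega, by omega, ?_⟩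
      rw [tailL_ne_iff] at h3 ⊢
      obtain ⟨z, hz1, hz2⟩ := h3
      refine ⟨u.pos⁻¹ * z, by rw [toAdd_mul, toAdd_inv]; omega, ?_⟩
      simp only [Wreath.one_toFun, toFun_inv_mul, mul_inv_cancel_left]
      intro hc
      exact hz2 (inv_mul_eq_one.mp hc.symm)
  rw [qB, qB, himg, Set.ncard_image_of_injective _ (fun a b hab => by
    simpa using sub_left_injective hab)]

lemma qS_inv_mul (S : Set G) (u v : Wreath G (Multiplicative ℤ)) :
    qS S 1 (u⁻¹ * v) = qS S u v := by
  unfold qS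
  have h1 : ∀ z, wordDist S ((1 : Wreath G (Multiplicative ℤ)).toFun z) ((u⁻¹ * v).toFun z)
      = wordDist S (u.toFun (u.pos * z)) (v.toFun (u.pos * z)) := by
    intro z
    rw [toFun_inv_mul]
    simp only [Wreath.one_toFun]
    exact wordDist_base S _ _
  rw [finsum_congr h1]
  exact finsum_comp_equiv (Equiv.mulLeft u.pos)
    (f := fun z => wordDist S (u.toFun z) (v.toFun z))

lemma wordDist_le_pair {S : Set G} (hS : IsSymmGenSet S) (u v : Wreath G (Multiplicative ℤ)) :
    wordDist (wreathGens S zGens) u v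
      ≤ 5 * (qD u v + qA u v + qB u v + qS S u v) := by
  rcases eq_or_ne u v with rfl | hne
  · simp
  · obtain ⟨l, hm, hp, hlen⟩ := exists_word_one hS (u⁻¹ * v)
    have h1 : wordDist (wreathGens S zGens) u v ≤ l.length :=
      wordDist_le_length _ hm hp.symm
    rw [qD_inv_mul, qA_inv_mul, qB_inv_mul, qS_inv_mul] at hlen
    have hpos : 1 ≤ qD u v + qA u v + qB u v + qS S u v := by
      by_contra hc
      push_neg at hc
      apply hne
      have hD0 : qD u v = 0 := by omega
      have hS0 : qS S u v = 0 := by omega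
      have hpos_eq : u.pos = v.pos := by
        have := hD0
        unfold qD at this
        have h2 : toAdd u.pos = toAdd v.pos := by omega
        exact Multiplicative.toAdd.injective h2
      have hfun : u.toFun = v.toFun := by
        funext z
        have hsupfin : (Function.support fun z =>
            wordDist S (u.toFun z) (v.toFun z)).Finite := by
          apply (diffSet_finite u v).subset
          intro z hz
          rw [Function.mem_support] at hz
          intro he
          apply hz
          rw [he, wordDist_self]
        have hle := single_le_finsum z hsupfin
          (fun j => Nat.zero_le _)
        have hz0 : wordDist S (u.toFun z) (v.toFun z) = 0 := by
          unfold qS at hS0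
          omega
        exact eq_of_wordDist_eq_zero (reach_all hS _ _) hz0
      exact Wreath.ext hfun hpos_eq
    omega

end Assembly


section AnalysisHelpers

open Multiplicative

/-- Index type for the discrete (counting-measure) part of the embedding. -/
structure LIdx : Type where
  t : ℤ
  b : Bool
  y : ℤ → ℕ

instance : MeasurableSpace LIdx := ⊤

instance : MeasurableSingletonClass LIdx := ⟨fun _ => trivial⟩

/-- `LIdx` as a product, for `tsum` manipulations. -/
def lIdxEquiv : (ℤ × Bool × (ℤ → ℕ)) ≃ LIdx where
  toFun p := ⟨p.1, p.2.1, p.2.2⟩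
  invFun x := (x.t, x.b, x.y)
  left_inv p := rfl
  right_inv x := rfl

/-- Encoding of a lamp configuration as an element of `ℤ → ℕ`. -/
def encCfg {G : Type*} (e : G → ℕ) (c : Multiplicative ℤ → G) : ℤ → ℕ :=
  fun t => e (c (ofAdd t))

lemma encCfg_inj {G : Type*} {e : G → ℕ} (he : Function.Injective e) :
    Function.Injective (encCfg e) := by
  intro c1 c2 hc
  funext z
  have h2 := congrFun hc (toAdd z)
  simp only [encCfg, ofAdd_toAdd] at h2
  exact he h2

open Classical in
lemma tsum_ind_pair {I : Type*} (P Q : Prop) [Decidable P] [Decidable Q] (cu cv : I)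
    [∀ y : I, Decidable (y = cu)] [∀ y : I, Decidable (y = cv)] :
    (∑' y : I,
        (‖(if P then (if y = cu then (1 : ℝ) else 0) else 0)
            - (if Q then (if y = cv then 1 else 0) else 0)‖₊ : ℝ≥0∞))
      = (if P ∧ Q ∧ cu ≠ cv then 2 else 0) + (if P ∧ ¬Q then 1 else 0)
          + (if Q ∧ ¬P then 1 else 0) := by
  by_cases hP : P <;> by_cases hQ : Q
  · by_cases hc : cu = cv
    · rw [if_neg (by tauto), if_neg (by tauto), if_neg (by tauto)]
      have hpt : ∀ y : I,
          (‖(if P then (if y = cu then (1 : ℝ) else 0) else 0)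
              - (if Q then (if y = cv then (1 : ℝ) else 0) else 0)‖₊ : ℝ≥0∞) = 0 := by
        intro y
        rw [if_pos hP, if_pos hQ]
        by_cases h1 : y = cu
        · rw [if_pos h1, if_pos (h1.trans hc)]
          simp
        · rw [if_neg h1, if_neg (fun h2 => h1 (h2.trans hc.symm))]
          simp
      rw [tsum_congr hpt, tsum_zero]
      simp
    · rw [if_pos ⟨hP, hQ, hc⟩, if_neg (by tauto), if_neg (by tauto)]
      have hpt : ∀ y : I,
          (‖(if P then (if y = cu then (1 : ℝ) else 0) else 0)
              - (if Q then (if y = cv then 1 else 0) else 0)‖₊ : ℝ≥0∞)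
            = (if y = cu then 1 else 0) + (if y = cv then 1 else 0) := by
        intro y
        rw [if_pos hP, if_pos hQ]
        by_cases h1 : y = cu <;> by_cases h2 : y = cv
        · exact absurd (h1.symm.trans h2) hc
        · rw [if_pos h1, if_neg h2, if_pos h1, if_neg h2]
          norm_num
        · rw [if_neg h1, if_pos h2, if_neg h1, if_pos h2]
          norm_num
        · rw [if_neg h1, if_neg h2, if_neg h1, if_neg h2]
          norm_num
      rw [tsum_congr hpt, ENNReal.tsum_add, tsum_ite_eq cu (fun _ => (1:ℝ≥0∞)),
        tsum_ite_eq cv (fun _ => (1:ℝ≥0∞))]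
      norm_num
  · rw [if_neg (by tauto), if_pos ⟨hP, hQ⟩, if_neg (by tauto)]
    have hpt : ∀ y : I,
        (‖(if P then (if y = cu then (1 : ℝ) else 0) else 0)
            - (if Q then (if y = cv then 1 else 0) else 0)‖₊ : ℝ≥0∞)
          = (if y = cu then 1 else 0) := by
      intro y
      rw [if_pos hP, if_neg hQ]
      by_cases h1 : y = cu <;> simp [h1]
    rw [tsum_congr hpt, tsum_ite_eq cu (fun _ => (1:ℝ≥0∞))]
    norm_num
  · rw [if_neg (by tauto), if_neg (by tauto), if_pos ⟨hQ, hP⟩]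
    have hpt : ∀ y : I,
        (‖(if P then (if y = cu then (1 : ℝ) else 0) else 0)
            - (if Q then (if y = cv then 1 else 0) else 0)‖₊ : ℝ≥0∞)
          = (if y = cv then 1 else 0) := by
      intro y
      rw [if_neg hP, if_pos hQ]
      by_cases h1 : y = cv <;> simp [h1]
    rw [tsum_congr hpt, tsum_ite_eq cv (fun _ => (1:ℝ≥0∞))]
    norm_num
  · rw [if_neg (by tauto), if_neg (by tauto), if_neg (by tauto)]
    have hpt : ∀ y : I,
        (‖(if P then (if y = cu then (1 : ℝ) else 0) else 0)
            - (if Q then (if y = cv then 1 else 0) else 0)‖₊ : ℝ≥0∞) = 0 := by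
      intro y
      rw [if_neg hP, if_neg hQ]
      simp
    rw [tsum_congr hpt, tsum_zero]
    simp

lemma tsum_ite_mem {s : Set ℤ} [∀ t : ℤ, Decidable (t ∈ s)] (hs : s.Finite) (a : ℝ≥0∞) :
    ∑' t : ℤ, (if t ∈ s then a else 0) = a * s.ncard := by
  rw [tsum_eq_sum (s := hs.toFinset) (fun t ht => if_neg (by simpa using ht))]
  rw [Finset.sum_congr rfl (fun t ht => if_pos (by simpa using ht))]
  rw [Finset.sum_const, nsmul_eq_mul, mul_comm]
  congr 1
  exact_mod_cast congrArg (Nat.cast : ℕ → ℝ≥0∞) (Set.ncard_eq_toFinset_card s hs).symm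

lemma ncard_Ico_int (a b : ℤ) : (Set.Ico a b).ncard = (b - a).toNat := by
  rw [← Finset.coe_Ico, Set.ncard_coe_finset, Int.card_Ico]

lemma ncard_Ioc_int (a b : ℤ) : (Set.Ioc a b).ncard = (b - a).toNat := by
  rw [← Finset.coe_Ioc, Set.ncard_coe_finset, Int.card_Ioc]

lemma ite_congr_prop {P Q : Prop} [Decidable P] [Decidable Q] (a : ℝ≥0∞) (h : P ↔ Q) :
    (if P then a else 0) = (if Q then a else 0) := by
  by_cases hp : P
  · rw [if_pos hp, if_pos (h.mp hp)]
  · rw [if_neg hp, if_neg (fun hq => hp (h.mpr hq))]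

lemma mEmb_inl {α β : Type*} [MeasurableSpace α] [MeasurableSpace β] :
    MeasurableEmbedding (Sum.inl : α → α ⊕ β) :=
  ⟨Sum.inl_injective, measurable_inl, fun _ hs => hs.inl_image⟩

lemma mEmb_inr {α β : Type*} [MeasurableSpace α] [MeasurableSpace β] :
    MeasurableEmbedding (Sum.inr : β → α ⊕ β) :=
  ⟨Sum.inr_injective, measurable_inr, fun _ hs => hs.inr_image⟩

end AnalysisHelpers

/-- If a finitely generated group `G` admits a bi-Lipschitz embedding into
`L₁`, then so does `G ≀ ℤ` (with the word metric from its canonical generating set). -/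
theorem wreath_Z_biLipschitz_L1
    {G : Type*} [Group G] (S : Finset G) (hS : IsSymmGenSet (S : Set G))
    (h : ∃ (Ω : Type) (_ : MeasurableSpace Ω) (μ : Measure Ω) (f : G → Lp ℝ 1 μ) (c C : ℝ),
      0 < c ∧ 0 < C ∧ ∀ x y : G,
        c * (wordDist (S : Set G) x y : ℝ) ≤ ‖f x - f y‖ ∧
        ‖f x - f y‖ ≤ C * (wordDist (S : Set G) x y : ℝ)) :
    ∃ (Ω : Type) (_ : MeasurableSpace Ω) (μ : Measure Ω)
      (F : Wreath G (Multiplicative ℤ) → Lp ℝ 1 μ) (c C : ℝ),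
      0 < c ∧ 0 < C ∧ ∀ u v : Wreath G (Multiplicative ℤ),
        c * (wordDist (wreathGens (S : Set G) zGens) u v : ℝ) ≤ ‖F u - F v‖ ∧
        ‖F u - F v‖ ≤ C * (wordDist (wreathGens (S : Set G) zGens) u v : ℝ) := by
  classical
  obtain ⟨Ω₀, m₀, μ₀, hG, c, C, hc, hC, hbd⟩ := h
  letI : MeasurableSpace Ω₀ := m₀
  -- `G` is countable, fix an injection into `ℕ`
  have hcnt : Countable G := by
    have hsur : Function.Surjective
        (fun l : List {x : G // x ∈ S} => (l.map Subtype.val).prod) := by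
      intro g
      obtain ⟨l, hl, hegg⟩ := exists_list_of_mem_closure' (S := (S : Set G)) hS.1
        (a := g) (by rw [hS.2]; trivial)
      refine ⟨l.attach.map (fun x => ⟨x.1, by exact_mod_cast hl x.1 x.2⟩), ?_⟩
      simp only [List.map_map]
      have hmm : (l.attach.map
          (Subtype.val ∘ fun x : {x // x ∈ l} => (⟨x.1, by exact_mod_cast hl x.1 x.2⟩ :
            {x : G // x ∈ S}))) = l := by
        simp
      rw [hmm]
      exact hegg.symm
    exact hsur.countable
  obtain ⟨e, he⟩ := Countable.exists_injective_nat G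
  -- measurable embeddings into the target space
  have hinl : MeasurableEmbedding (Sum.inl : LIdx → LIdx ⊕ (ℤ × Ω₀)) := mEmb_inl
  have hemb : ∀ j : ℤ,
      MeasurableEmbedding (fun ω : Ω₀ => (Sum.inr (j, ω) : LIdx ⊕ (ℤ × Ω₀))) :=
    fun j => mEmb_inr.comp (measurableEmbedding_prodMk_left j)
  set μ : Measure (LIdx ⊕ (ℤ × Ω₀)) :=
    (Measure.count : Measure LIdx).map Sum.inl
      + Measure.sum (fun j : ℤ => μ₀.map (fun ω => Sum.inr (j, ω))) with hμ
  set Fraw : Wreath G (Multiplicative ℤ) → (LIdx ⊕ (ℤ × Ω₀)) → ℝ := fun u => Sum.elim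
    (fun x : LIdx =>
      if x.b then
        (if Multiplicative.toAdd u.pos ≤ x.t then
          (if x.y = encCfg e (tailR x.t u) then (1 : ℝ) else 0) else 0)
      else
        (if x.t ≤ Multiplicative.toAdd u.pos then
          (if x.y = encCfg e (tailL x.t u) then (1 : ℝ) else 0) else 0))
    (fun p : ℤ × Ω₀ =>
      (hG (u.toFun (Multiplicative.ofAdd p.1)) - hG 1 : Lp ℝ 1 μ₀) p.2) with hFraw
  -- measurability
  have hasm : ∀ u, AEStronglyMeasurable (Fraw u) μ := by
    intro u
    rw [hμ]
    apply AEStronglyMeasurable.add_measure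
    · rw [hinl.aestronglyMeasurable_map_iff]
      have hm : Measurable (Fraw u ∘ (Sum.inl : LIdx → LIdx ⊕ (ℤ × Ω₀))) :=
        fun t _ => trivial
      exact hm.aestronglyMeasurable
    · rw [aestronglyMeasurable_sum_measure_iff]
      intro j
      rw [(hemb j).aestronglyMeasurable_map_iff]
      have hco : (Fraw u ∘ fun ω : Ω₀ => (Sum.inr (j, ω) : LIdx ⊕ (ℤ × Ω₀)))
          = ⇑(hG (u.toFun (Multiplicative.ofAdd j)) - hG 1) := rfl
      rw [hco]
      exact Lp.aestronglyMeasurable _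
  -- the key norm computation
  have key : ∀ u v : Wreath G (Multiplicative ℤ),
      ∫⁻ x, (‖Fraw u x - Fraw v x‖₊ : ℝ≥0∞) ∂μ
        = ((2 * (qA u v + qB u v + qD u v) : ℕ) : ℝ≥0∞)
          + ∑' j : ℤ, eLpNorm
              (⇑(hG (u.toFun (Multiplicative.ofAdd j))
                - hG (v.toFun (Multiplicative.ofAdd j)))) 1 μ₀ := by
    intro u v
    rw [hμ, lintegral_add_measure, hinl.lintegral_map, lintegral_sum_measure]
    congr 1
    · -- discrete part
      rw [lintegral_count]
      rw [← Equiv.tsum_eq lIdxEquiv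
        (fun x : LIdx => (‖Fraw u (Sum.inl x) - Fraw v (Sum.inl x)‖₊ : ℝ≥0∞))]
      rw [ENNReal.tsum_prod']
      have hper : ∀ t : ℤ,
          (∑' q : Bool × (ℤ → ℕ),
            (‖Fraw u (Sum.inl (lIdxEquiv (t, q))) - Fraw v (Sum.inl (lIdxEquiv (t, q)))‖₊
              : ℝ≥0∞))
          = (((if t ∈ setB u v then 2 else 0)
              + (if t ∈ Set.Ioc (Multiplicative.toAdd v.pos) (Multiplicative.toAdd u.pos)
                  then 1 else 0)
              + (if t ∈ Set.Ioc (Multiplicative.toAdd u.pos) (Multiplicative.toAdd v.pos)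
                  then 1 else 0))
            + ((if t ∈ setA u v then 2 else 0)
              + (if t ∈ Set.Ico (Multiplicative.toAdd u.pos) (Multiplicative.toAdd v.pos)
                  then 1 else 0)
              + (if t ∈ Set.Ico (Multiplicative.toAdd v.pos) (Multiplicative.toAdd u.pos)
                  then 1 else 0))) := by
        intro t
        rw [ENNReal.tsum_prod', tsum_bool]
        congr 1
        · -- b = false : the `tailL` part
          have hred : ∀ y : ℤ → ℕ,
              (‖Fraw u (Sum.inl (lIdxEquiv (t, (false, y))))
                - Fraw v (Sum.inl (lIdxEquiv (t, (false, y))))‖₊ : ℝ≥0∞)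
              = (‖(if t ≤ Multiplicative.toAdd u.pos then
                    (if y = encCfg e (tailL t u) then (1 : ℝ) else 0) else 0)
                  - (if t ≤ Multiplicative.toAdd v.pos then
                    (if y = encCfg e (tailL t v) then (1 : ℝ) else 0) else 0)‖₊ : ℝ≥0∞) := by
            intro y
            rfl
          rw [tsum_congr hred]
          rw [tsum_ind_pair (t ≤ Multiplicative.toAdd u.pos) (t ≤ Multiplicative.toAdd v.pos)
            (encCfg e (tailL t u)) (encCfg e (tailL t v))]
          congr 1
          · congr 1
            · refine ite_congr_prop 2 ⟨?_, ?_⟩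
              · rintro ⟨h1, h2, h3⟩
                exact ⟨h1, h2, fun hteq => h3 (by rw [hteq])⟩
              · rintro ⟨h1, h2, h3⟩
                exact ⟨h1, h2, fun hcc => h3 (encCfg_inj he hcc)⟩
            · refine ite_congr_prop 1 ⟨?_, ?_⟩
              · rintro ⟨h1, h2⟩
                rw [Set.mem_Ioc]
                omega
              · intro ht
                rw [Set.mem_Ioc] at ht
                refine ⟨by omega, by omega⟩
          · refine ite_congr_prop 1 ⟨?_, ?_⟩
            · rintro ⟨h1, h2⟩
              rw [Set.mem_Ioc]
              omega
            · intro ht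
              rw [Set.mem_Ioc] at ht
              refine ⟨by omega, by omega⟩
        · -- b = true : the `tailR` part
          have hred : ∀ y : ℤ → ℕ,
              (‖Fraw u (Sum.inl (lIdxEquiv (t, (true, y))))
                - Fraw v (Sum.inl (lIdxEquiv (t, (true, y))))‖₊ : ℝ≥0∞)
              = (‖(if Multiplicative.toAdd u.pos ≤ t then
                    (if y = encCfg e (tailR t u) then (1 : ℝ) else 0) else 0)
                  - (if Multiplicative.toAdd v.pos ≤ t then
                    (if y = encCfg e (tailR t v) then (1 : ℝ) else 0) else 0)‖₊ : ℝ≥0∞) := by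
            intro y
            rfl
          rw [tsum_congr hred]
          rw [tsum_ind_pair (Multiplicative.toAdd u.pos ≤ t) (Multiplicative.toAdd v.pos ≤ t)
            (encCfg e (tailR t u)) (encCfg e (tailR t v))]
          congr 1
          · congr 1
            · refine ite_congr_prop 2 ⟨?_, ?_⟩
              · rintro ⟨h1, h2, h3⟩
                exact ⟨h1, h2, fun hteq => h3 (by rw [hteq])⟩
              · rintro ⟨h1, h2, h3⟩
                exact ⟨h1, h2, fun hcc => h3 (encCfg_inj he hcc)⟩
            · refine ite_congr_prop 1 ⟨?_, ?_⟩
              · rintro ⟨h1, h2⟩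
                rw [Set.mem_Ico]
                omega
              · intro ht
                rw [Set.mem_Ico] at ht
                refine ⟨by omega, by omega⟩
          · refine ite_congr_prop 1 ⟨?_, ?_⟩
            · rintro ⟨h1, h2⟩
              rw [Set.mem_Ico]
              omega
            · intro ht
              rw [Set.mem_Ico] at ht
              refine ⟨by omega, by omega⟩
      rw [tsum_congr hper]
      rw [ENNReal.tsum_add, ENNReal.tsum_add, ENNReal.tsum_add, ENNReal.tsum_add,
        ENNReal.tsum_add]
      rw [tsum_ite_mem (setB_finite u v) 2, tsum_ite_mem (setA_finite u v) 2,
        tsum_ite_mem (Set.finite_Ioc _ _) 1, tsum_ite_mem (Set.finite_Ioc _ _) 1,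
        tsum_ite_mem (Set.finite_Ico _ _) 1, tsum_ite_mem (Set.finite_Ico _ _) 1]
      rw [ncard_Ioc_int, ncard_Ioc_int, ncard_Ico_int, ncard_Ico_int]
      unfold qA qB qD
      rw [show ((2 : ℝ≥0∞) = ((2 : ℕ) : ℝ≥0∞)) by norm_num]
      norm_cast
      omega
    · -- continuous part
      apply tsum_congr
      intro j
      rw [(hemb j).lintegral_map]
      have hae : (fun ω => Fraw u (Sum.inr (j, ω)) - Fraw v (Sum.inr (j, ω)))
          =ᵐ[μ₀] ⇑(hG (u.toFun (Multiplicative.ofAdd j))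
            - hG (v.toFun (Multiplicative.ofAdd j))) := by
        have h2 : hG (u.toFun (Multiplicative.ofAdd j)) - hG (v.toFun (Multiplicative.ofAdd j))
            = (hG (u.toFun (Multiplicative.ofAdd j)) - hG 1)
              - (hG (v.toFun (Multiplicative.ofAdd j)) - hG 1) := by abel
        rw [h2]
        filter_upwards [Lp.coeFn_sub (hG (u.toFun (Multiplicative.ofAdd j)) - hG 1)
          (hG (v.toFun (Multiplicative.ofAdd j)) - hG 1)] with ω hω
        rw [hω, Pi.sub_apply]
        rfl
      have hae2 : (fun ω => (‖Fraw u (Sum.inr (j, ω)) - Fraw v (Sum.inr (j, ω))‖₊ : ℝ≥0∞))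
          =ᵐ[μ₀] (fun ω => (‖(⇑(hG (u.toFun (Multiplicative.ofAdd j))
            - hG (v.toFun (Multiplicative.ofAdd j))) : Ω₀ → ℝ) ω‖₊ : ℝ≥0∞)) :=
        hae.mono fun ω hω => congrArg (fun r : ℝ => (‖r‖₊ : ℝ≥0∞)) hω
      rw [lintegral_congr_ae hae2]
      simp only [eLpNorm_one_eq_lintegral_enorm, enorm_eq_nnnorm]
  -- membership in L¹
  have hmem : ∀ u, MemLp (fun x => Fraw u x - Fraw 1 x) 1 μ := by
    intro u
    refine ⟨(hasm u).sub (hasm 1), ?_⟩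
    simp only [eLpNorm_one_eq_lintegral_enorm, enorm_eq_nnnorm]
    have hkey := key u 1
    rw [hkey]
    refine ENNReal.add_lt_top.mpr ⟨?_, ?_⟩
    · exact ENNReal.natCast_lt_top _
    · have hzero : ∀ j : ℤ, u.toFun (Multiplicative.ofAdd j) = 1 →
          eLpNorm (⇑(hG (u.toFun (Multiplicative.ofAdd j))
            - hG ((1 : Wreath G (Multiplicative ℤ)).toFun (Multiplicative.ofAdd j)))) 1 μ₀
              = 0 := by
        intro j hj
        simp only [Wreath.one_toFun]
        rw [hj, sub_self]
        rw [eLpNorm_congr_ae (Lp.coeFn_zero ℝ 1 μ₀)]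
        exact eLpNorm_zero
      rw [tsum_eq_sum (s := (u.finsupp.toFinset).image (fun z => Multiplicative.toAdd z))
        (fun j hj => hzero j (by
          by_contra hne
          apply hj
          exact Finset.mem_image.mpr ⟨Multiplicative.ofAdd j,
            by rw [Set.Finite.mem_toFinset]; exact hne, by simp⟩))]
      exact ENNReal.sum_lt_top.mpr (fun j _ => Lp.eLpNorm_lt_top _)
  set Femb : Wreath G (Multiplicative ℤ) → Lp ℝ 1 μ := fun u => (hmem u).toLp _ with hFemb
  -- the norm formula
  have hnorm : ∀ u v : Wreath G (Multiplicative ℤ), ‖Femb u - Femb v‖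
      = ((2 * (qA u v + qB u v + qD u v) : ℕ) : ℝ)
        + ∑ z ∈ (diffSet_finite u v).toFinset, ‖hG (u.toFun z) - hG (v.toFun z)‖ := by
    intro u v
    rw [hFemb]
    show ‖(hmem u).toLp _ - (hmem v).toLp _‖ = _
    rw [← MemLp.toLp_sub, Lp.norm_toLp]
    have hfun : ((fun x => Fraw u x - Fraw 1 x) - fun x => Fraw v x - Fraw 1 x)
        = fun x => Fraw u x - Fraw v x := by
      funext x
      simp only [Pi.sub_apply]
      ring
    rw [hfun]
    simp only [eLpNorm_one_eq_lintegral_enorm, enorm_eq_nnnorm]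
    rw [key u v]
    have hts : ∑' j : ℤ, eLpNorm (⇑(hG (u.toFun (Multiplicative.ofAdd j))
          - hG (v.toFun (Multiplicative.ofAdd j)))) 1 μ₀
        = ∑ z ∈ (diffSet_finite u v).toFinset,
            eLpNorm (⇑(hG (u.toFun z) - hG (v.toFun z))) 1 μ₀ := by
      have h1 := Equiv.tsum_eq (Multiplicative.ofAdd (α := ℤ))
        (fun z => eLpNorm (⇑(hG (u.toFun z) - hG (v.toFun z))) 1 μ₀)
      have h2 : (∑' z : Multiplicative ℤ, eLpNorm (⇑(hG (u.toFun z) - hG (v.toFun z))) 1 μ₀)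
          = ∑ z ∈ (diffSet_finite u v).toFinset,
              eLpNorm (⇑(hG (u.toFun z) - hG (v.toFun z))) 1 μ₀ := by
        apply tsum_eq_sum
        intro z hz
        have heq : u.toFun z = v.toFun z := by
          by_contra hne
          exact hz (by rw [Set.Finite.mem_toFinset]; exact hne)
        rw [heq, sub_self, eLpNorm_congr_ae (Lp.coeFn_zero ℝ 1 μ₀)]
        exact eLpNorm_zero
      exact h1.trans h2
    rw [hts]
    rw [ENNReal.toReal_add (ENNReal.natCast_ne_top _)
      (ENNReal.sum_lt_top.mpr (fun z _ => Lp.eLpNorm_lt_top _)).ne]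
    rw [ENNReal.toReal_natCast]
    congr 1
    rw [ENNReal.toReal_sum (fun z _ => (Lp.eLpNorm_lt_top _).ne)]
    apply Finset.sum_congr rfl
    intro z _
    exact (Lp.norm_def _).symm
  -- final assembly
  have hreach : ∀ u v : Wreath G (Multiplicative ℤ), Reach (wreathGens (S : Set G) zGens) u v :=
    fun u v => reach_wreath hS u v
  have hmin : 0 < min 2 c := lt_min (by norm_num) hc
  refine ⟨LIdx ⊕ (ℤ × Ω₀), inferInstance, μ, Femb, min 2 c / 5, C + 6,
    div_pos hmin (by norm_num), by linarith, ?_⟩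
  intro u v
  obtain ⟨hA, hB, hD, hSle⟩ := quantities_le_wordDist hS (hreach u v)
  have h5 := wordDist_le_pair hS u v
  have hqs : qS (S : Set G) u v = ∑ z ∈ (diffSet_finite u v).toFinset,
      wordDist (S : Set G) (u.toFun z) (v.toFun z) :=
    qS_eq_sum _ (fun z hz => by rw [Set.Finite.mem_toFinset]; exact hz)
  have hlow : c * (qS (S : Set G) u v : ℝ)
      ≤ ∑ z ∈ (diffSet_finite u v).toFinset, ‖hG (u.toFun z) - hG (v.toFun z)‖ := by
    rw [hqs]
    push_cast
    rw [Finset.mul_sum]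
    exact Finset.sum_le_sum (fun z _ => (hbd _ _).1)
  have hup : (∑ z ∈ (diffSet_finite u v).toFinset, ‖hG (u.toFun z) - hG (v.toFun z)‖)
      ≤ C * (qS (S : Set G) u v : ℝ) := by
    rw [hqs]
    push_cast
    rw [Finset.mul_sum]
    exact Finset.sum_le_sum (fun z _ => (hbd _ _).2)
  have hAr : (qA u v : ℝ) ≤ (wordDist (wreathGens (S : Set G) zGens) u v : ℝ) :=
    Nat.cast_le.mpr hA
  have hBr : (qB u v : ℝ) ≤ (wordDist (wreathGens (S : Set G) zGens) u v : ℝ) :=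
    Nat.cast_le.mpr hB
  have hDr : (qD u v : ℝ) ≤ (wordDist (wreathGens (S : Set G) zGens) u v : ℝ) :=
    Nat.cast_le.mpr hD
  have hSr : (qS (S : Set G) u v : ℝ) ≤ (wordDist (wreathGens (S : Set G) zGens) u v : ℝ) :=
    Nat.cast_le.mpr hSle
  have h5r : (wordDist (wreathGens (S : Set G) zGens) u v : ℝ)
      ≤ 5 * ((qD u v : ℝ) + qA u v + qB u v + qS (S : Set G) u v) := by
    exact_mod_cast h5
  constructor
  · rw [hnorm u v]
    push_cast
    have e1 : min 2 c * (qD u v : ℝ) ≤ 2 * qD u v :=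
      mul_le_mul_of_nonneg_right (min_le_left _ _) (Nat.cast_nonneg _)
    have e2 : min 2 c * (qA u v : ℝ) ≤ 2 * qA u v :=
      mul_le_mul_of_nonneg_right (min_le_left _ _) (Nat.cast_nonneg _)
    have e3 : min 2 c * (qB u v : ℝ) ≤ 2 * qB u v :=
      mul_le_mul_of_nonneg_right (min_le_left _ _) (Nat.cast_nonneg _)
    have e4 : min 2 c * (qS (S : Set G) u v : ℝ) ≤ c * qS (S : Set G) u v :=
      mul_le_mul_of_nonneg_right (min_le_right _ _) (Nat.cast_nonneg _)
    have h5' : min 2 c / 5 * (wordDist (wreathGens (S : Set G) zGens) u v : ℝ)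
        ≤ min 2 c / 5 * (5 * ((qD u v : ℝ) + qA u v + qB u v + qS (S : Set G) u v)) :=
      mul_le_mul_of_nonneg_left h5r (by positivity)
    have hdist : min 2 c / 5 * (5 * ((qD u v : ℝ) + qA u v + qB u v + qS (S : Set G) u v))
        = min 2 c * (qD u v : ℝ) + min 2 c * qA u v + min 2 c * qB u v
          + min 2 c * qS (S : Set G) u v := by
      ring
    linarith
  · rw [hnorm u v]
    push_cast
    have f2 : C * (qS (S : Set G) u v : ℝ)
        ≤ C * (wordDist (wreathGens (S : Set G) zGens) u v : ℝ) :=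
      mul_le_mul_of_nonneg_left hSr (le_of_lt hC)
    have hnn : (0 : ℝ) ≤ (wordDist (wreathGens (S : Set G) zGens) u v : ℝ) :=
      Nat.cast_nonneg _
    linarith
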